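/- arXiv:2507.09437 — 10 statements merged into one kernel-verified Lean document; each statement's English description precedes it below -/
import Mathlib

section
/- Let d ≥ 1 and let (C(x))_{x∈ℝ^d} be a family of closed convex subsets of ℝ^d which is totally ordered by inclusion (for every x, y either C(x) ⊆ C(y) or C(y) ⊆ C(x)) and satisfies, for every x, w ∈ ℝ^d: x ∈ C(x), and w ∈ C(x) implies C(w) ⊆ C(x). Then there exists a lower semi-continuous quasi-convex function f : ℝ^d → ℝ such that {w : f(w) ≤ f(x)} = C(x) for every x ∈ ℝ^d. -/
open Set Filter Topology

theorem stmt3 (d : ℕ) (hd : 1 ≤ d)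
    (C : EuclideanSpace ℝ (Fin d) → Set (EuclideanSpace ℝ (Fin d)))
    (hclosed : ∀ x, IsClosed (C x)) (hconvex : ∀ x, Convex ℝ (C x))
    (hordered : ∀ x y, C x ⊆ C y ∨ C y ⊆ C x)
    (hmem : ∀ x, x ∈ C x)
    (htrans : ∀ x w, w ∈ C x → C w ⊆ C x) :
    ∃ f : EuclideanSpace ℝ (Fin d) → ℝ, LowerSemicontinuous f ∧
      (∀ ℓ : ℝ, Convex ℝ {x | f x ≤ ℓ}) ∧
      ∀ x, {w | f w ≤ f x} = C x := by
  classical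
  -- a countable family of sets separating points from closed sets
  obtain ⟨B, hBc, hBne, hBbasis⟩ :=
    TopologicalSpace.exists_countable_basis (EuclideanSpace ℝ (Fin d))
  have hBnonempty : B.Nonempty := by
    obtain ⟨v, hvB, -, -⟩ := hBbasis.exists_subset_of_mem_open
      (mem_univ (0 : EuclideanSpace ℝ (Fin d))) isOpen_univ
    exact ⟨v, hvB⟩
  obtain ⟨K, hKrange⟩ := hBc.exists_eq_range hBnonempty
  have hKsep : ∀ (A : Set (EuclideanSpace ℝ (Fin d))) (b : EuclideanSpace ℝ (Fin d)),
      IsOpen A → b ∈ A → ∃ n, b ∈ K n ∧ K n ⊆ A := by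
    intro A b hA hb
    obtain ⟨v, hvB, hbv, hvA⟩ := hBbasis.exists_subset_of_mem_open hb hA
    rw [hKrange] at hvB
    obtain ⟨n, rfl⟩ := hvB
    exact ⟨n, hbv, hvA⟩
  -- the "measure-like" functional g
  set c : ℕ → ℝ := fun n => (2⁻¹ : ℝ) ^ n with hc
  have hc0 : ∀ n, 0 < c n := fun n => by positivity
  set g : Set (EuclideanSpace ℝ (Fin d)) → ℝ :=
    fun A => ∑' n, if (A ∩ K n).Nonempty then c n else 0 with hg
  have hsummable : ∀ A : Set (EuclideanSpace ℝ (Fin d)),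
      Summable (fun n => if (A ∩ K n).Nonempty then c n else 0) := by
    intro A
    refine Summable.of_nonneg_of_le (fun n => ?_) (fun n => ?_)
      (summable_geometric_of_lt_one (by norm_num) (by norm_num : (2⁻¹:ℝ) < 1))
    · by_cases h : (A ∩ K n).Nonempty
      · rw [if_pos h]; exact (hc0 n).le
      · rw [if_neg h]
    · by_cases h : (A ∩ K n).Nonempty
      · rw [if_pos h]
      · rw [if_neg h]; positivity
  have hgmono : ∀ A B₁ : Set (EuclideanSpace ℝ (Fin d)), A ⊆ B₁ → g A ≤ g B₁ := by
    intro A B₁ hAB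
    apply Summable.tsum_le_tsum _ (hsummable A) (hsummable B₁)
    intro n
    by_cases h : (A ∩ K n).Nonempty
    · rw [if_pos h, if_pos (h.mono (inter_subset_inter_left _ hAB))]
    · rw [if_neg h]
      split
      · exact (hc0 n).le
      · exact le_refl _
  have hg0 : ∀ A, 0 ≤ g A := by
    intro A
    apply tsum_nonneg
    intro n
    split
    · exact (hc0 n).le
    · exact le_refl _
  have hterm_le : ∀ (A : Set (EuclideanSpace ℝ (Fin d))) (n : ℕ),
      (if (A ∩ K n).Nonempty then c n else 0) ≤ c n := by
    intro A n; split; exacts [le_refl _, (hc0 n).le]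
  have hgstrict : ∀ A B₁ : Set (EuclideanSpace ℝ (Fin d)), A ⊆ B₁ → IsClosed A →
      (∃ b ∈ B₁, b ∉ A) → g A < g B₁ := by
    intro A B₁ hAB hAcl ⟨b, hbB, hbA⟩
    obtain ⟨n, hbK, hKA⟩ := hKsep Aᶜ b hAcl.isOpen_compl hbA
    apply Summable.tsum_lt_tsum (i := n) _ _ (hsummable A) (hsummable B₁)
    · intro m
      dsimp only
      by_cases h : (A ∩ K m).Nonempty
      · rw [if_pos h, if_pos (h.mono (inter_subset_inter_left _ hAB))]
      · rw [if_neg h]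
        split
        · exact (hc0 m).le
        · exact le_refl _
    · have hA : ¬(A ∩ K n).Nonempty := by
        rintro ⟨z, hzA, hzK⟩
        exact hKA hzK hzA
      rw [if_neg hA, if_pos ⟨b, hbB, hbK⟩]
      exact hc0 n
  -- the strict lower set
  set L : EuclideanSpace ℝ (Fin d) → Set (EuclideanSpace ℝ (Fin d)) :=
    fun x => {w | C w ⊆ C x ∧ ¬ C x ⊆ C w} with hL
  have hLsubC : ∀ x, L x ⊆ C x := fun x w hw => hw.1 (hmem w)
  have hCsubL : ∀ w x, C w ⊆ C x → ¬ C x ⊆ C w → C w ⊆ L x := by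
    intro w x h1 h2 z hz
    refine ⟨(htrans w z hz).trans h1, fun hback => h2 (hback.trans (htrans w z hz))⟩
  -- the function f
  set f : EuclideanSpace ℝ (Fin d) → ℝ :=
    fun x => if IsClosed (L x) then g (C x) else g (L x) with hf
  have hfleC : ∀ x, f x ≤ g (C x) := by
    intro x
    simp only [hf]
    split
    · exact le_refl _
    · exact hgmono _ _ (hLsubC x)
  have hfgeL : ∀ x, g (L x) ≤ f x := by
    intro x
    simp only [hf]
    split
    · exact hgmono _ _ (hLsubC x)
    · exact le_refl _
  have hfclass : ∀ w x, C w = C x → f w = f x := by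
    intro w x h
    have hLeq : L w = L x := by
      rw [hL]; ext z; simp only [mem_setOf_eq, h]
    simp only [hf]; simp only [hLeq, h]
  have hfstrict : ∀ w x, C w ⊆ C x → ¬ C x ⊆ C w → f w < f x := by
    intro w x h1 h2
    have hfw : f w ≤ g (C w) := hfleC w
    by_cases hcl : IsClosed (L x)
    · have hfx : f x = g (C x) := by simp only [hf]; exact if_pos hcl
      rw [hfx]
      refine lt_of_le_of_lt hfw (hgstrict _ _ h1 (hclosed w) ⟨x, hmem x, fun hxw => ?_⟩)
      exact h2 (htrans w x hxw)
    · have hfx : f x = g (L x) := by simp only [hf]; exact if_neg hcl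
      rw [hfx]
      have hCL : C w ⊆ L x := hCsubL w x h1 h2
      have hne : ∃ b ∈ L x, b ∉ C w := by
        by_contra hno
        push_neg at hno
        have : L x = C w := Subset.antisymm hno hCL
        rw [this] at hcl
        exact hcl (hclosed w)
      exact lt_of_le_of_lt hfw (hgstrict _ _ hCL (hclosed w) hne)
  have hfmono : ∀ w x, C w ⊆ C x → f w ≤ f x := by
    intro w x h
    by_cases h2 : C x ⊆ C w
    · exact le_of_eq (hfclass w x (Subset.antisymm h h2))
    · exact (hfstrict w x h h2).le
  -- sublevel sets
  have hsublevel : ∀ x, {w | f w ≤ f x} = C x := by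
    intro x
    ext w
    simp only [mem_setOf_eq]
    constructor
    · intro h
      by_contra hw
      have h1 : ¬ C w ⊆ C x := fun hsub => hw (hsub (hmem w))
      have h2 : C x ⊆ C w := (hordered w x).resolve_left h1
      exact absurd h (not_le.2 (hfstrict x w h2 h1))
    · intro hw
      exact hfmono w x (htrans x w hw)
  -- quasi-convexity of all sublevel sets
  have hqc : ∀ ℓ : ℝ, Convex ℝ {x | f x ≤ ℓ} := by
    intro ℓ
    rw [convex_iff_segment_subset]
    intro x hx y hy z hz
    simp only [mem_setOf_eq] at hx hy ⊢
    rcases hordered x y with h | h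
    · have hzC : z ∈ C y := (hconvex y).segment_subset (h (hmem x)) (hmem y) hz
      exact le_trans (hfmono z y (htrans y z hzC)) hy
    · have hzC : z ∈ C x := (hconvex x).segment_subset (hmem x) (h (hmem y)) hz
      exact le_trans (hfmono z x (htrans x z hzC)) hx
  -- lower semicontinuity
  have hlsc : LowerSemicontinuous f := by
    rw [lowerSemicontinuous_iff_isClosed_preimage]
    intro ℓ
    have : (f ⁻¹' Iic ℓ) = {x | f x ≤ ℓ} := rfl
    rw [this]
    apply IsSeqClosed.isClosed
    intro u v hu hv
    simp only [mem_setOf_eq] at hu ⊢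
    by_cases hcase : ∃ n, C v ⊆ C (u n)
    · obtain ⟨n, hn⟩ := hcase
      exact le_trans (hfmono v (u n) hn) (hu n)
    · push_neg at hcase
      have huL : ∀ n, u n ∈ L v := by
        intro n
        exact ⟨(hordered (u n) v).resolve_right (hcase n), hcase n⟩
      have hvnL : v ∉ L v := fun h => h.2 (le_refl _)
      have hnotcl : ¬ IsClosed (L v) := by
        intro h
        exact hvnL (h.mem_of_tendsto hv (Eventually.of_forall huL))
      have hfv : f v = g (L v) := by simp only [hf]; exact if_neg hnotcl
      -- every class strictly below v has g (C ·) ≤ ℓ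
      have key : ∀ w ∈ L v, g (C w) ≤ ℓ := by
        intro w hw
        -- find a strictly bigger class still below v
        have hex : ∃ w', w' ∈ L v ∧ C w ⊆ C w' ∧ ¬ C w' ⊆ C w := by
          by_contra hno
          push_neg at hno
          have hall : ∀ n, u n ∈ C w := by
            intro n
            rcases hordered (u n) w with h | h
            · exact h (hmem (u n))
            · rcases hordered w (u n) with h' | h'
              · exact hno (u n) (huL n) h' (hmem (u n))
              · exact h' (hmem (u n))
          have hvC : v ∈ C w := (hclosed w).mem_of_tendsto hv (Eventually.of_forall hall)
          exact hw.2 (htrans w v hvC)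
        obtain ⟨w', hw'L, hww1, hww2⟩ := hex
        by_cases hc2 : ∃ n, C w' ⊆ C (u n)
        · obtain ⟨n, hn⟩ := hc2
          have hCwL : C w ⊆ L (u n) := by
            intro z hz
            refine ⟨(htrans w z hz).trans (hww1.trans hn), fun hback => ?_⟩
            exact hww2 (hn.trans (hback.trans (htrans w z hz)))
          calc g (C w) ≤ g (L (u n)) := hgmono _ _ hCwL
            _ ≤ f (u n) := hfgeL (u n)
            _ ≤ ℓ := hu n
        · push_neg at hc2
          exfalso
          have hall : ∀ n, u n ∈ C w' := by
            intro n
            exact ((hordered (u n) w').resolve_right (hc2 n)) (hmem (u n))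
          have hvC : v ∈ C w' := (hclosed w').mem_of_tendsto hv (Eventually.of_forall hall)
          exact hw'L.2 (htrans w' v hvC)
      -- finite sets of indices hit by L v are hit by a single class below v
      have hub : ∀ s : Finset ℕ, ∃ m, m ∈ L v ∧
          ∀ n ∈ s, (L v ∩ K n).Nonempty → (C m ∩ K n).Nonempty := by
        intro s
        induction s using Finset.induction_on with
        | empty => exact ⟨u 0, huL 0, by simp⟩
        | @insert a s ha ih =>
          obtain ⟨m, hmL, hm⟩ := ih
          by_cases hne : (L v ∩ K a).Nonempty
          · obtain ⟨p, hpL, hpK⟩ := hne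
            rcases hordered p m with hpm | hmp
            · refine ⟨m, hmL, ?_⟩
              intro n hn hnne
              rcases Finset.mem_insert.1 hn with rfl | hns
              · exact ⟨p, hpm (hmem p), hpK⟩
              · exact hm n hns hnne
            · refine ⟨p, hpL, ?_⟩
              intro n hn hnne
              rcases Finset.mem_insert.1 hn with rfl | hns
              · exact ⟨p, hmem p, hpK⟩
              · obtain ⟨q, hqC, hqK⟩ := hm n hns hnne
                exact ⟨q, hmp hqC, hqK⟩
          · refine ⟨m, hmL, ?_⟩
            intro n hn hnne
            rcases Finset.mem_insert.1 hn with rfl | hns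
            · exact absurd hnne hne
            · exact hm n hns hnne
      have hgoal : g (L v) ≤ ℓ := by
        simp only [hg]
        apply Summable.tsum_le_of_sum_le (hsummable (L v))
        intro s
        obtain ⟨m, hmL, hm⟩ := hub s
        have h1 : ∑ n ∈ s, (if (L v ∩ K n).Nonempty then c n else 0)
            ≤ ∑ n ∈ s, (if (C m ∩ K n).Nonempty then c n else 0) := by
          apply Finset.sum_le_sum
          intro n hn
          by_cases h : (L v ∩ K n).Nonempty
          · rw [if_pos h, if_pos (hm n hn h)]
          · rw [if_neg h]
            split
            · exact (hc0 n).le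
            · exact le_refl _
        have h2 : ∑ n ∈ s, (if (C m ∩ K n).Nonempty then c n else 0) ≤ g (C m) := by
          simp only [hg]
          apply Summable.sum_le_tsum s _ (hsummable (C m))
          intro n _
          split
          · exact (hc0 n).le
          · exact le_refl _
        exact h1.trans (h2.trans (key m hmL))
      rw [hfv]
      exact hgoal
  exact ⟨f, hlsc, hqc, hsublevel⟩
end

section
/- Let d ≥ 1 and let F : ℝ^d ⇒ ℝ^d be a cyclically quasi-monotone multi-map with full domain. Then: (i) the relation ≺_F is irreflexive and transitive (hence asymmetric); (ii) the relation ⪯_F is reflexive and transitive; (iii) for every x, y, x ≺_F y implies x ⪯_F y; (iv) for every x, y, z, if x ≺_F y and y ⪯_F z then x ≺_F z. -/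
open scoped RealInnerProductSpace

/-- Cyclic quasi-monotonicity of a multi-map `F : ℝ^d ⇒ ℝ^d`. -/
def CyclicallyQuasiMonotone {d : ℕ}
    (F : EuclideanSpace ℝ (Fin d) → Set (EuclideanSpace ℝ (Fin d))) : Prop :=
  ∀ (N : ℕ) (x p : ℕ → EuclideanSpace ℝ (Fin d)),
    0 < N → x N = x 0 → (∀ i < N, p i ∈ F (x i)) →
    ∃ i < N, ⟪p i, x (i + 1) - x i⟫ ≤ 0

/-- `x 0, …, x N` is an `F`-ascending path. -/
def AscendingPath {d : ℕ} (F : EuclideanSpace ℝ (Fin d) → Set (EuclideanSpace ℝ (Fin d)))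
    (x : ℕ → EuclideanSpace ℝ (Fin d)) (N : ℕ) : Prop :=
  ∀ i < N, ∃ p ∈ F (x i), 0 < ⟪p, x (i + 1) - x i⟫

/-- `a ≺_F b`: there is an `F`-ascending path from `a` to `b`. -/
def PrecF {d : ℕ} (F : EuclideanSpace ℝ (Fin d) → Set (EuclideanSpace ℝ (Fin d)))
    (a b : EuclideanSpace ℝ (Fin d)) : Prop :=
  ∃ (N : ℕ) (x : ℕ → EuclideanSpace ℝ (Fin d)),
    0 < N ∧ x 0 = a ∧ x N = b ∧ AscendingPath F x N

/-- `a ⪯_F b`: `{w : w ≺_F a} ⊆ {w : w ≺_F b}`. -/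
def PreceqF {d : ℕ} (F : EuclideanSpace ℝ (Fin d) → Set (EuclideanSpace ℝ (Fin d)))
    (a b : EuclideanSpace ℝ (Fin d)) : Prop :=
  ∀ w, PrecF F w a → PrecF F w b

/-- The convex set `C^F(x) = {w : w ⪯_F x}`. -/
def CF {d : ℕ} (F : EuclideanSpace ℝ (Fin d) → Set (EuclideanSpace ℝ (Fin d)))
    (x : EuclideanSpace ℝ (Fin d)) : Set (EuclideanSpace ℝ (Fin d)) :=
  {w | PreceqF F w x}

theorem stmt5 (d : ℕ) (hd : 1 ≤ d)
    (F : EuclideanSpace ℝ (Fin d) → Set (EuclideanSpace ℝ (Fin d)))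
    (hdom : ∀ x, (F x).Nonempty) (hF : CyclicallyQuasiMonotone F) :
    (∀ x, ¬ PrecF F x x) ∧
    (∀ x y z, PrecF F x y → PrecF F y z → PrecF F x z) ∧
    (∀ x y, PrecF F x y → ¬ PrecF F y x) ∧
    (∀ x, PreceqF F x x) ∧
    (∀ x y z, PreceqF F x y → PreceqF F y z → PreceqF F x z) ∧
    (∀ x y, PrecF F x y → PreceqF F x y) ∧
    (∀ x y z, PrecF F x y → PreceqF F y z → PrecF F x z) := by

  classical
  have irr : ∀ x, ¬ PrecF F x x := by
    rintro a ⟨N, x, hN, hx0, hxN, hasc⟩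
    choose p hpF hpi using fun i (hi : i < N) => hasc i hi
    set q : ℕ → EuclideanSpace ℝ (Fin d) :=
      fun i => if h : i < N then p i h else (hdom (x i)).choose with hq
    obtain ⟨i, hi, hle⟩ := hF N x q hN (hxN.trans hx0.symm)
      (fun i hi => by simp only [hq, dif_pos hi]; exact hpF i hi)
    have := hpi i hi
    rw [hq] at hle
    simp only [dif_pos hi] at hle
    linarith
  have htr : ∀ x y z, PrecF F x y → PrecF F y z → PrecF F x z := by
    rintro a b c ⟨N, x, hN, hx0, hxN, hax⟩ ⟨M, y, hM, hy0, hyM, hay⟩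
    refine ⟨N + M, fun i => if i ≤ N then x i else y (i - N), by omega, ?_, ?_, ?_⟩
    · simp [hx0]
    · have : ¬ (N + M ≤ N) := by omega
      simp [this, Nat.add_sub_cancel_left, hyM]
    · intro i hi
      by_cases hiN : i < N
      · have h1 : i ≤ N := hiN.le
        have h2 : i + 1 ≤ N := hiN
        simpa [h1, h2] using hax i hiN
      · have h1 : y (i - N) = if i ≤ N then x i else y (i - N) := by
          by_cases h : i ≤ N
          · have : i = N := by omega
            subst this
            simp [hxN, hy0]
          · simp [h]
        have h2 : ¬ (i + 1 ≤ N) := by omega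
        have h3 : i + 1 - N = (i - N) + 1 := by omega
        have := hay (i - N) (by omega)
        beta_reduce
        rw [← h1, if_neg h2, h3]
        exact this
  refine ⟨irr, htr, ?_, fun x w h => h, fun x y z h1 h2 w hw => h2 w (h1 w hw),
    fun x y hxy w hw => htr w x y hw hxy, fun x y z hxy hyz => hyz x hxy⟩
  intro x y hxy hyx
  exact irr x (htr x y x hxy hyx)
end

section
/- Let d ≥ 1 and let F : ℝ^d ⇒ ℝ^d be a cyclically quasi-monotone multi-map with full domain. For every x ∈ ℝ^d, the set C^F(x) = {w : w ⪯_F x} is closed and convex; in fact C^F(x) is the intersection of the closed half-spaces {z : (z − w)·p ≤ 0} over all pairs (w, p) with p ∈ F(w) and w not satisfying w ≺_F x. -/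
open scoped RealInnerProductSpace

lemma precF_trans {d : ℕ} {F : EuclideanSpace ℝ (Fin d) → Set (EuclideanSpace ℝ (Fin d))}
    {a b c : EuclideanSpace ℝ (Fin d)} (h1 : PrecF F a b) (h2 : PrecF F b c) :
    PrecF F a c := by
  obtain ⟨N, x, hN, hx0, hxN, hasc⟩ := h1
  obtain ⟨M, y, hM, hy0, hyM, hasc'⟩ := h2
  refine ⟨N + M, fun i => if i < N then x i else y (i - N), by omega, ?_, ?_, ?_⟩
  · simp [hN, hx0]
  · have h : ¬ (N + M < N) := by omega
    simp [h, hyM]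
  · intro i hi
    by_cases hiN : i < N
    · have hxi1 : (if i + 1 < N then x (i + 1) else y (i + 1 - N)) = x (i + 1) := by
        by_cases h : i + 1 < N
        · simp [h]
        · have h2 : i + 1 = N := by omega
          rw [if_neg h, h2, Nat.sub_self, hy0, hxN]
      obtain ⟨p, hp, hpos⟩ := hasc i hiN
      refine ⟨p, by simpa [hiN] using hp, ?_⟩
      simpa only [hiN, hxi1, if_true, ↓reduceIte] using hpos
    · obtain ⟨p, hp, hpos⟩ := hasc' (i - N) (by omega)
      have h1 : ¬ (i + 1 < N) := by omega
      have h2 : i + 1 - N = i - N + 1 := by omega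
      refine ⟨p, by simpa [hiN] using hp, ?_⟩
      simpa [hiN, h1, h2] using hpos

lemma precF_step {d : ℕ} {F : EuclideanSpace ℝ (Fin d) → Set (EuclideanSpace ℝ (Fin d))}
    {w z p : EuclideanSpace ℝ (Fin d)} (hp : p ∈ F w) (hpos : 0 < ⟪p, z - w⟫) :
    PrecF F w z := by
  refine ⟨1, fun i => if i = 0 then w else z, one_pos, by simp, by simp, ?_⟩
  intro i hi
  have h0 : i = 0 := by omega
  subst h0
  exact ⟨p, by simpa using hp, by simpa using hpos⟩

lemma precF_prefix {d : ℕ} {F : EuclideanSpace ℝ (Fin d) → Set (EuclideanSpace ℝ (Fin d))}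
    {x : ℕ → EuclideanSpace ℝ (Fin d)} {N k : ℕ} (hasc : AscendingPath F x N)
    (hk : 0 < k) (hkN : k ≤ N) : PrecF F (x 0) (x k) :=
  ⟨k, x, hk, rfl, rfl, fun i hi => hasc i (lt_of_lt_of_le hi hkN)⟩

theorem stmt7 (d : ℕ) (hd : 1 ≤ d)
    (F : EuclideanSpace ℝ (Fin d) → Set (EuclideanSpace ℝ (Fin d)))
    (hdom : ∀ x, (F x).Nonempty) (hF : CyclicallyQuasiMonotone F)
    (x : EuclideanSpace ℝ (Fin d)) :
    IsClosed (CF F x) ∧ Convex ℝ (CF F x) ∧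
    CF F x = ⋂ (w : EuclideanSpace ℝ (Fin d)) (p ∈ F w) (_ : ¬ PrecF F w x),
      {z | ⟪p, z - w⟫ ≤ 0} := by
  have hset : CF F x = ⋂ (w : EuclideanSpace ℝ (Fin d)) (p ∈ F w) (_ : ¬ PrecF F w x),
      {z | ⟪p, z - w⟫ ≤ 0} := by
    apply Set.Subset.antisymm
    · intro z hz
      simp only [Set.mem_iInter]
      intro w p hp hnw
      simp only [Set.mem_setOf_eq]
      by_contra hgt
      push_neg at hgt
      exact hnw (hz w (precF_step hp hgt))
    · intro z hz
      simp only [Set.mem_iInter] at hz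
      intro w hwz
      by_contra hnwx
      obtain ⟨N, y, hN, hy0, hyN, hasc⟩ := hwz
      have hnot : ¬ PrecF F (y (N - 1)) x := by
        intro hlast
        apply hnwx
        rcases Nat.eq_or_lt_of_le hN with h1 | h1
        · rw [← hy0]
          have : N - 1 = 0 := by omega
          rwa [this] at hlast
        · have hpre : PrecF F w (y (N - 1)) := by
            rw [← hy0]
            exact precF_prefix hasc (by omega) (by omega)
          exact precF_trans hpre hlast
      obtain ⟨p, hp, hpos⟩ := hasc (N - 1) (by omega)
      have hle := hz (y (N - 1)) p hp hnot
      simp only [Set.mem_setOf_eq] at hle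
      have hNe : N - 1 + 1 = N := by omega
      rw [hNe, hyN] at hpos
      exact absurd hle (not_le.mpr hpos)
  have hhalf : ∀ (w p : EuclideanSpace ℝ (Fin d)),
      {z : EuclideanSpace ℝ (Fin d) | ⟪p, z - w⟫ ≤ 0} = {z | ⟪p, z⟫ ≤ ⟪p, w⟫} := by
    intro w p
    ext z
    simp [inner_sub_right, sub_nonpos]
  constructor
  · rw [hset]
    refine isClosed_iInter fun w => isClosed_iInter fun p =>
      isClosed_iInter fun _ => isClosed_iInter fun _ => ?_
    rw [hhalf]
    exact isClosed_le (continuous_const.inner continuous_id) continuous_const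
  constructor
  · rw [hset]
    refine convex_iInter fun w => convex_iInter fun p =>
      convex_iInter fun _ => convex_iInter fun _ => ?_
    rw [hhalf]
    exact convex_halfSpace_le ⟨fun a b => inner_add_right p a b,
      fun c a => real_inner_smul_right p a c⟩ _
  · exact hset
end

section
/- Let d ≥ 1 and let F : ℝ^d ⇒ ℝ^d be a cyclically quasi-monotone multi-map with full domain. For every x ∈ ℝ^d, F(x) is contained in the normal cone to C^F(x) at x, i.e. every p ∈ F(x) satisfies p·(y − x) ≤ 0 for all y ∈ C^F(x). -/
open scoped RealInnerProductSpace

theorem stmt8 (d : ℕ) (hd : 1 ≤ d)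
    (F : EuclideanSpace ℝ (Fin d) → Set (EuclideanSpace ℝ (Fin d)))
    (hdom : ∀ x, (F x).Nonempty) (hF : CyclicallyQuasiMonotone F)
    (x : EuclideanSpace ℝ (Fin d)) :
    ∀ p ∈ F x, ∀ y ∈ CF F x, ⟪p, y - x⟫ ≤ 0 := by
  intro p hp y hy
  by_contra h
  push_neg at h
  -- x ≺_F y via one-step path
  have hxy : PrecF F x y := by
    refine ⟨1, fun i => if i = 0 then x else y, one_pos, rfl, rfl, ?_⟩
    intro i hi
    interval_cases i
    exact ⟨p, hp, by simpa using h⟩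
  -- hence x ≺_F x
  obtain ⟨N, z, hN, hz0, hzN, hasc⟩ := hy x hxy
  -- choose ascending vectors
  choose q hq hqpos using hasc
  -- build a total choice function
  classical
  set P : ℕ → EuclideanSpace ℝ (Fin d) := fun i =>
    if hi : i < N then q i hi else (hdom (z i)).choose
  have hPmem : ∀ i < N, P i ∈ F (z i) := by
    intro i hi
    simp only [P, dif_pos hi]
    exact hq i hi
  obtain ⟨i, hi, hle⟩ := hF N z P hN (by rw [hz0, hzN]) hPmem
  have : 0 < ⟪P i, z (i + 1) - z i⟫ := by
    simp only [P, dif_pos hi]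
    exact hqpos i hi
  linarith
end

section
/- Let d ≥ 1 and let F : ℝ^d ⇒ ℝ^d be a cyclically quasi-monotone multi-map with full domain. If the relation ⪯_F is total (for every x, y ∈ ℝ^d, x ⪯_F y or y ⪯_F x), then there exists a lower semi-continuous quasi-convex function f : ℝ^d → ℝ such that F(x) ⊆ N_f(x) for every x ∈ ℝ^d. -/
open scoped RealInnerProductSpace

/-- The normal cone multi-map of a real-valued function `f`. -/
def NormalConeMap {d : ℕ} (f : EuclideanSpace ℝ (Fin d) → ℝ) (x : EuclideanSpace ℝ (Fin d)) :
    Set (EuclideanSpace ℝ (Fin d)) :=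
  {p | ∀ w, f w ≤ f x → ⟪p, w - x⟫ ≤ 0}

open Topology

section Aux

variable {d : ℕ} {F : EuclideanSpace ℝ (Fin d) → Set (EuclideanSpace ℝ (Fin d))}

lemma ascending_mono {x : ℕ → EuclideanSpace ℝ (Fin d)} {N M : ℕ}
    (h : AscendingPath F x N) (hMN : M ≤ N) : AscendingPath F x M :=
  fun i hi => h i (lt_of_lt_of_le hi hMN)

lemma prec_step {x v p : EuclideanSpace ℝ (Fin d)} (hp : p ∈ F x) (h : 0 < ⟪p, v - x⟫) :
    PrecF F x v := by
  refine ⟨1, fun i => if i = 0 then x else v, one_pos, by simp, by simp, ?_⟩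
  intro i hi
  have : i = 0 := by omega
  subst this
  exact ⟨p, by simpa using hp, by simpa using h⟩

lemma prec_trans {a b c : EuclideanSpace ℝ (Fin d)} (h1 : PrecF F a b) (h2 : PrecF F b c) :
    PrecF F a c := by
  obtain ⟨N, x, hN, hx0, hxN, hx⟩ := h1
  obtain ⟨M, y, hM, hy0, hyM, hy⟩ := h2
  refine ⟨N + M, fun i => if i < N then x i else y (i - N), by omega, ?_, ?_, ?_⟩
  · simp only [hN, if_pos]; exact hx0
  · have h' : ¬ (N + M < N) := by omega
    simp only [h', if_neg, if_false]
    simpa using hyM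
  · intro i hi
    by_cases hiN : i < N
    · obtain ⟨p, hp, hpos⟩ := hx i hiN
      refine ⟨p, by simpa [hiN] using hp, ?_⟩
      by_cases hi1 : i + 1 < N
      · simpa [hiN, hi1] using hpos
      · have hie : i + 1 = N := by omega
        have hxy : y (i + 1 - N) = x (i + 1) := by
          rw [hie]; simp [hy0, ← hxN]
        simp only [hiN, if_pos, hi1, if_neg, if_false, hxy]
        exact hpos
    · have hi1 : ¬ (i + 1 < N) := by omega
      obtain ⟨p, hp, hpos⟩ := hy (i - N) (by omega)
      refine ⟨p, by simpa [hiN] using hp, ?_⟩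
      have h1 : i + 1 - N = i - N + 1 := by omega
      simp only [hiN, hi1, if_neg, if_false, h1]
      exact hpos

lemma prec_decomp {a b : EuclideanSpace ℝ (Fin d)} (h : PrecF F a b) :
    ∃ q p, p ∈ F q ∧ 0 < ⟪p, b - q⟫ ∧ (q = a ∨ PrecF F a q) := by
  obtain ⟨N, x, hN, hx0, hxN, hx⟩ := h
  obtain ⟨p, hp, hpos⟩ := hx (N - 1) (by omega)
  have hN1 : N - 1 + 1 = N := by omega
  rw [hN1, hxN] at hpos
  refine ⟨x (N - 1), p, hp, hpos, ?_⟩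
  rcases eq_or_lt_of_le (Nat.one_le_iff_ne_zero.2 (by omega) : 1 ≤ N) with h1 | h1
  · left; rw [show N - 1 = 0 by omega, hx0]
  · right
    exact ⟨N - 1, x, by omega, hx0, rfl, ascending_mono hx (by omega)⟩

lemma prec_irrefl (hF : CyclicallyQuasiMonotone F) (a : EuclideanSpace ℝ (Fin d)) :
    ¬ PrecF F a a := by
  rintro ⟨N, x, hN, hx0, hxN, hx⟩
  choose! p hp hppos using hx
  obtain ⟨i, hi, hle⟩ := hF N x p hN (hxN.trans hx0.symm) hp
  exact absurd (hppos i hi) (not_lt.2 hle)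

lemma prec_preceq {a b : EuclideanSpace ℝ (Fin d)} (h : PrecF F a b) : PreceqF F a b :=
  fun _ hw => prec_trans hw h

lemma isOpen_prec (u : EuclideanSpace ℝ (Fin d)) : IsOpen {w | PrecF F u w} := by
  rw [isOpen_iff_forall_mem_open]
  intro w hw
  obtain ⟨q, p, hp, hpos, hq⟩ := prec_decomp hw
  refine ⟨{v | 0 < ⟪p, v - q⟫}, ?_, ?_, hpos⟩
  · intro v hv
    have h1 : PrecF F q v := prec_step hp hv
    rcases hq with rfl | hq
    · exact h1
    · exact prec_trans hq h1
  · exact isOpen_lt continuous_const (continuous_const.inner (continuous_id.sub continuous_const))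

lemma prec_combo {w a b : EuclideanSpace ℝ (Fin d)} {ta tb : ℝ} (hta : 0 ≤ ta) (htb : 0 ≤ tb)
    (hsum : ta + tb = 1) (h : PrecF F w (ta • a + tb • b)) :
    PrecF F w a ∨ PrecF F w b := by
  obtain ⟨q, p, hp, hpos, hq⟩ := prec_decomp h
  have hzq : ⟪p, (ta • a + tb • b : EuclideanSpace ℝ (Fin d)) - q⟫
      = ta * ⟪p, a - q⟫ + tb * ⟪p, b - q⟫ := by
    simp only [inner_sub_right, inner_add_right, real_inner_smul_right]
    linear_combination ⟪p, q⟫ * hsum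
  rw [hzq] at hpos
  have hcase : 0 < ⟪p, a - q⟫ ∨ 0 < ⟪p, b - q⟫ := by
    by_contra hcon
    push_neg at hcon
    obtain ⟨h1, h2⟩ := hcon
    nlinarith
  rcases hcase with h1 | h1
  · left
    have h2 : PrecF F q a := prec_step hp h1
    rcases hq with rfl | hq
    · exact h2
    · exact prec_trans hq h2
  · right
    have h2 : PrecF F q b := prec_step hp h1
    rcases hq with rfl | hq
    · exact h2
    · exact prec_trans hq h2

lemma lowerSet_convex (htotal : ∀ x y, PreceqF F x y ∨ PreceqF F y x)
    {S : Set (EuclideanSpace ℝ (Fin d))}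
    (hS : ∀ x y, PreceqF F x y → y ∈ S → x ∈ S) : Convex ℝ S := by
  intro a ha b hb ta tb hta htb hsum
  rcases htotal a b with h | h
  · refine hS _ b ?_ hb
    intro w hw
    rcases prec_combo hta htb hsum hw with h1 | h1
    · exact h w h1
    · exact h1
  · refine hS _ a ?_ ha
    intro w hw
    rcases prec_combo hta htb hsum hw with h1 | h1
    · exact h1
    · exact h w h1

end Aux

theorem stmt9 (d : ℕ) (hd : 1 ≤ d)
    (F : EuclideanSpace ℝ (Fin d) → Set (EuclideanSpace ℝ (Fin d)))
    (hdom : ∀ x, (F x).Nonempty) (hF : CyclicallyQuasiMonotone F)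
    (htotal : ∀ x y, PreceqF F x y ∨ PreceqF F y x) :
    ∃ f : EuclideanSpace ℝ (Fin d) → ℝ, LowerSemicontinuous f ∧
      (∀ ℓ : ℝ, Convex ℝ {x | f x ≤ ℓ}) ∧
      ∀ x, F x ⊆ NormalConeMap f x := by
  classical
  obtain ⟨B, hBc, -, hBb⟩ := TopologicalSpace.exists_countable_basis (EuclideanSpace ℝ (Fin d))
  have hBne : B.Nonempty := by
    have h0 : (0 : EuclideanSpace ℝ (Fin d)) ∈ ⋃₀ B := by
      rw [hBb.sUnion_eq]; trivial
    obtain ⟨t, ht, -⟩ := h0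
    exact ⟨t, ht⟩
  obtain ⟨b, hb⟩ := hBc.exists_eq_range hBne
  have hbopen : ∀ n, IsOpen (b n) := fun n => hBb.isOpen (by rw [hb]; exact ⟨n, rfl⟩)
  have hbasis : ∀ (V : Set (EuclideanSpace ℝ (Fin d))) (x : EuclideanSpace ℝ (Fin d)),
      IsOpen V → x ∈ V → ∃ n, x ∈ b n ∧ b n ⊆ V := by
    intro V x hV hxV
    obtain ⟨t, htB, hxt, htV⟩ := hBb.exists_subset_of_mem_open hxV hV
    rw [hb] at htB
    obtain ⟨n, rfl⟩ := htB
    exact ⟨n, hxt, htV⟩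
  set U : EuclideanSpace ℝ (Fin d) → Set (EuclideanSpace ℝ (Fin d)) :=
    fun x => {w | ¬ PreceqF F w x} with hUdef
  have hUmono : ∀ {x y}, PreceqF F x y → U y ⊆ U x := by
    intro x y hxy w hw hc
    exact hw (fun u hu => hxy u (hc u hu))
  have hUself : ∀ x, x ∉ U x := fun x hx => hx (fun u hu => hu)
  set term : EuclideanSpace ℝ (Fin d) → ℕ → ℝ :=
    fun x n => if b n ⊆ U x then ((1:ℝ)/2)^n else 0 with htermdef
  have hterm_nonneg : ∀ x n, 0 ≤ term x n := by
    intro x n; simp only [htermdef]; split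
    · positivity
    · exact le_rfl
  have hterm_le : ∀ x n, term x n ≤ ((1:ℝ)/2)^n := by
    intro x n; simp only [htermdef]; split
    · exact le_rfl
    · positivity
  have hgeom : Summable (fun n : ℕ => ((1:ℝ)/2)^n) :=
    summable_geometric_of_lt_one (by norm_num) (by norm_num)
  have hsumm : ∀ x, Summable (term x) := fun x =>
    Summable.of_nonneg_of_le (hterm_nonneg x) (hterm_le x) hgeom
  set g : EuclideanSpace ℝ (Fin d) → ℝ := fun x => -∑' n, term x n with hgdef
  have hg_le_zero : ∀ x, g x ≤ 0 := fun x => neg_nonpos.2 (tsum_nonneg (hterm_nonneg x))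
  have hg_ge : ∀ x, -2 ≤ g x := by
    intro x
    have h1 : ∑' n, term x n ≤ ∑' n : ℕ, ((1:ℝ)/2)^n :=
      Summable.tsum_le_tsum (hterm_le x) (hsumm x) hgeom
    have h2 : ∑' n : ℕ, ((1:ℝ)/2)^n = 2 := by
      rw [tsum_geometric_of_lt_one (by norm_num) (by norm_num)]; norm_num
    simp only [hgdef]; linarith
  have hterm_mono : ∀ {x y}, PreceqF F x y → ∀ n, term y n ≤ term x n := by
    intro x y hxy n
    simp only [htermdef]
    by_cases h : b n ⊆ U y
    · rw [if_pos h, if_pos (h.trans (hUmono hxy))]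
    · rw [if_neg h]
      split
      · positivity
      · exact le_rfl
  have hgmono : ∀ {x y}, PreceqF F x y → g x ≤ g y := by
    intro x y hxy
    simp only [hgdef]
    exact neg_le_neg (Summable.tsum_le_tsum (hterm_mono hxy) (hsumm y) (hsumm x))
  have hgap : ∀ {x w p : EuclideanSpace ℝ (Fin d)}, p ∈ F x → 0 < ⟪p, w - x⟫ →
      ∃ m, w ∈ b m ∧ ∀ v ∈ b m, g x + ((1:ℝ)/2)^m ≤ g v := by
    intro x w p hp hpos
    have hHopen : IsOpen {v : EuclideanSpace ℝ (Fin d) | 0 < ⟪p, v - x⟫} :=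
      isOpen_lt continuous_const (continuous_const.inner (continuous_id.sub continuous_const))
    obtain ⟨m, hwm, hmH⟩ := hbasis _ w hHopen hpos
    refine ⟨m, hwm, ?_⟩
    intro v hv
    have hxv : PrecF F x v := prec_step hp (hmH hv)
    have hxv' : PreceqF F x v := prec_preceq hxv
    have hHU : {v' : EuclideanSpace ℝ (Fin d) | 0 < ⟪p, v' - x⟫} ⊆ U x := by
      intro v' hv' hc
      exact prec_irrefl hF x (hc x (prec_step hp hv'))
    have hmIx : term x m = ((1:ℝ)/2)^m := if_pos (hmH.trans hHU)
    have hmIv : term v m = 0 := by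
      apply if_neg
      intro hc
      exact hUself v (hc hv)
    have hdiff : ∀ n, 0 ≤ term x n - term v n := fun n => sub_nonneg.2 (hterm_mono hxv' n)
    have hsub : Summable (fun n => term x n - term v n) := (hsumm x).sub (hsumm v)
    have h1 : term x m - term v m ≤ ∑' n, (term x n - term v n) :=
      Summable.le_tsum hsub m (fun n _ => hdiff n)
    have h2 : ∑' n, (term x n - term v n) = (∑' n, term x n) - ∑' n, term v n :=
      Summable.tsum_sub (hsumm x) (hsumm v)
    rw [h2, hmIx, hmIv] at h1
    simp only [hgdef]
    linarith
  set fs : EuclideanSpace ℝ (Fin d) → ℝ := fun x => Filter.liminf g (𝓝 x) with hfsdef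
  have hbdd : ∀ x, Filter.IsBoundedUnder (· ≥ ·) (𝓝 x) g :=
    fun x => Filter.isBoundedUnder_of ⟨-2, fun v => hg_ge v⟩
  have hcob : ∀ x, Filter.IsCoboundedUnder (· ≥ ·) (𝓝 x) g :=
    fun x => Filter.isCoboundedUnder_ge_of_le _ (fun v => hg_le_zero v)
  have hfs_le : ∀ x, fs x ≤ g x := by
    intro x
    apply Filter.liminf_le_of_frequently_le _ (hbdd x)
    exact Filter.frequently_iff.2 fun {V} hV => ⟨x, mem_of_mem_nhds hV, le_rfl⟩
  have hlsc : LowerSemicontinuous fs := by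
    intro x y hy
    obtain ⟨c, hyc, hcx⟩ := exists_between hy
    have hev : ∀ᶠ v in 𝓝 x, c < g v := Filter.eventually_lt_of_lt_liminf hcx (hbdd x)
    obtain ⟨V, hVs, hVo, hxV⟩ := eventually_nhds_iff.1 hev
    refine Filter.eventually_of_mem (hVo.mem_nhds hxV) fun v hv => ?_
    have h1 : c ≤ fs v := by
      apply Filter.le_liminf_of_le (hcob v)
      exact Filter.eventually_of_mem (hVo.mem_nhds hv) fun u hu => (hVs u hu).le
    exact lt_of_lt_of_le hyc h1
  have hconv : ∀ ℓ : ℝ, Convex ℝ {x | fs x ≤ ℓ} := by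
    intro ℓ
    have hset : {x | fs x ≤ ℓ} = ⋂ k : ℕ, closure {v | g v ≤ ℓ + ((k:ℝ)+1)⁻¹} := by
      ext x
      simp only [Set.mem_setOf_eq, Set.mem_iInter]
      constructor
      · intro hx k
        rw [mem_closure_iff_frequently]
        by_contra hc
        rw [Filter.not_frequently] at hc
        have h1 : ℓ + ((k:ℝ)+1)⁻¹ ≤ fs x := by
          apply Filter.le_liminf_of_le (hcob x)
          filter_upwards [hc] with v hv
          simp only [Set.mem_setOf_eq, not_le] at hv
          exact hv.le
        have h2 : 0 < ((k:ℝ)+1)⁻¹ := by positivity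
        linarith
      · intro hx
        by_contra hc
        push_neg at hc
        obtain ⟨k, hk⟩ := exists_nat_one_div_lt (sub_pos.2 hc)
        have h1 := hx k
        rw [mem_closure_iff_frequently] at h1
        have h2 : fs x ≤ ℓ + ((k:ℝ)+1)⁻¹ :=
          Filter.liminf_le_of_frequently_le (h1.mono fun v hv => hv) (hbdd x)
        rw [one_div] at hk
        linarith
    rw [hset]
    refine convex_iInter fun k => Convex.closure ?_
    exact lowerSet_convex htotal (fun a b' hab hbmem => le_trans (hgmono hab) hbmem)
  refine ⟨fs, hlsc, hconv, ?_⟩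
  intro x p hp
  simp only [NormalConeMap, Set.mem_setOf_eq]
  intro w hw
  by_contra hcon
  push_neg at hcon
  obtain ⟨m, hwm, hm⟩ := hgap hp hcon
  have h1 : g x + ((1:ℝ)/2)^m ≤ fs w := by
    apply Filter.le_liminf_of_le (hcob w)
    exact Filter.eventually_of_mem ((hbopen m).mem_nhds hwm) fun v hv => hm v hv
  have h2 : fs x ≤ g x := hfs_le x
  have h3 : (0:ℝ) < ((1:ℝ)/2)^m := by positivity
  simp only [hfsdef, hgdef] at *
  linarith
end

section
/- Let F : ℝ ⇒ ℝ be a cyclically quasi-monotone multi-map with full domain. For every x, y ∈ ℝ, x ≺_F y if and only if there exists p ∈ F(x) with p·(y − x) > 0. -/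
/-- Cyclic quasi-monotonicity of a multi-map `F : ℝ ⇒ ℝ`. -/
def CyclicallyQuasiMonotone1 (F : ℝ → Set ℝ) : Prop :=
  ∀ (N : ℕ) (x p : ℕ → ℝ),
    0 < N → x N = x 0 → (∀ i < N, p i ∈ F (x i)) →
    ∃ i < N, p i * (x (i + 1) - x i) ≤ 0

/-- `x 0, …, x N` is an `F`-ascending path. -/
def AscendingPath1 (F : ℝ → Set ℝ) (x : ℕ → ℝ) (N : ℕ) : Prop :=
  ∀ i < N, ∃ p ∈ F (x i), 0 < p * (x (i + 1) - x i)

/-- `a ≺_F b`: there is an `F`-ascending path from `a` to `b`. -/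
def PrecF1 (F : ℝ → Set ℝ) (a b : ℝ) : Prop :=
  ∃ (N : ℕ) (x : ℕ → ℝ), 0 < N ∧ x 0 = a ∧ x N = b ∧ AscendingPath1 F x N

/-- `a ⪯_F b`: `{w : w ≺_F a} ⊆ {w : w ≺_F b}`. -/
def PreceqF1 (F : ℝ → Set ℝ) (a b : ℝ) : Prop :=
  ∀ w, PrecF1 F w a → PrecF1 F w b

/-- The convex set `C^F(x) = {w : w ⪯_F x}`. -/
def CF1 (F : ℝ → Set ℝ) (x : ℝ) : Set ℝ :=
  {w | PreceqF1 F w x}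

lemma key10 (F : ℝ → Set ℝ) (hF : CyclicallyQuasiMonotone1 F)
    (a c b p q : ℝ) (hp : p ∈ F a) (hq : q ∈ F c)
    (h1 : 0 < p * (c - a)) (h2 : 0 < q * (b - c)) : 0 < p * (b - a) := by
  by_contra hcon
  push_neg at hcon
  -- derive 0 < q * (a - c)
  have hq' : 0 < q * (a - c) := by
    rcases lt_trichotomy p 0 with hp0 | hp0 | hp0
    · nlinarith
    · nlinarith
    · nlinarith
  -- cycle a, c, a violates CQM
  obtain ⟨i, hi, hle⟩ := hF 2 (fun i => if i = 1 then c else a)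
      (fun i => if i = 1 then q else p) (by norm_num) (by norm_num)
      (by
        intro i hi
        interval_cases i <;> simpa)
  interval_cases i <;> simp_all <;> linarith

theorem stmt10 (F : ℝ → Set ℝ) (hdom : ∀ x, (F x).Nonempty)
    (hF : CyclicallyQuasiMonotone1 F) (x y : ℝ) :
    PrecF1 F x y ↔ ∃ p ∈ F x, 0 < p * (y - x) := by
  constructor
  · rintro ⟨N, xs, hN, h0, hNy, hasc⟩
    obtain ⟨p0, hp0, hstep0⟩ := hasc 0 hN
    have claim : ∀ k, k ≤ N → 0 < k → 0 < p0 * (xs k - xs 0) := by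
      intro k
      induction k with
      | zero => intro _ h; exact absurd h (lt_irrefl 0)
      | succ k ih =>
        intro hkN _
        rcases Nat.eq_zero_or_pos k with hk0 | hk0
        · subst hk0; exact hstep0
        · have hk : 0 < p0 * (xs k - xs 0) := ih (le_of_lt hkN) hk0
          obtain ⟨q, hq, hqs⟩ := hasc k (lt_of_lt_of_le (Nat.lt_succ_self k) hkN)
          exact key10 F hF (xs 0) (xs k) (xs (k + 1)) p0 q
            (by rwa [h0] at hp0 ⊢ <;> exact hp0) hq hk hqs
    have := claim N le_rfl hN
    rw [h0, hNy] at this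
    rw [h0] at hp0
    exact ⟨p0, hp0, this⟩
  · rintro ⟨p, hp, hps⟩
    refine ⟨1, fun i => if i = 0 then x else y, one_pos, by norm_num, by norm_num, ?_⟩
    intro i hi
    interval_cases i
    simpa using ⟨p, hp, hps⟩
end

section
/- Let F : ℝ ⇒ ℝ be a cyclically quasi-monotone multi-map with full domain, and let C_* = ⋂_{x∈ℝ} C^F(x). If γ ∈ C_*, then for every x > γ one has F(x) ⊆ [0, +∞), and for every x < γ one has F(x) ⊆ (−∞, 0]. -/
theorem stmt11 (F : ℝ → Set ℝ) (hdom : ∀ x, (F x).Nonempty)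
    (hF : CyclicallyQuasiMonotone1 F) (γ : ℝ) (hγ : γ ∈ ⋂ x : ℝ, CF1 F x) :
    (∀ x, γ < x → F x ⊆ Set.Ici (0 : ℝ)) ∧ (∀ x, x < γ → F x ⊆ Set.Iic (0 : ℝ)) := by
  -- no F-ascending cycle exists
  have noself : ∀ a, ¬ PrecF1 F a a := by
    rintro a ⟨N, x, hN, hx0, hxN, hasc⟩
    choose p hp hpos using hasc
    set q : ℕ → ℝ := fun i => if h : i < N then p i h else (hdom (x i)).choose with hq
    obtain ⟨i, hi, hle⟩ := hF N x q hN (hxN.trans hx0.symm) (by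
      intro i hi
      simp only [hq, dif_pos hi]
      exact hp i hi)
    have : q i = p i hi := by simp [hq, dif_pos hi]
    rw [this] at hle
    exact absurd hle (not_le.mpr (hpos i hi))
  -- no w precedes γ
  have noprec : ∀ w, ¬ PrecF1 F w γ := by
    intro w hw
    have hmem : γ ∈ CF1 F w := Set.mem_iInter.mp hγ w
    exact noself w (hmem w hw)
  constructor
  · intro x hx p hp
    by_contra hneg
    rw [Set.mem_Ici] at hneg
    exact noprec x ⟨1, fun i => if i = 0 then x else γ, one_pos, rfl, rfl, by
      intro i hi
      interval_cases i
      refine ⟨p, by simpa using hp, ?_⟩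
      have hp' : p < 0 := lt_of_not_ge (by simpa using hneg)
      norm_num
      nlinarith⟩
  · intro x hx p hp
    by_contra hpos
    rw [Set.mem_Iic] at hpos
    exact noprec x ⟨1, fun i => if i = 0 then x else γ, one_pos, rfl, rfl, by
      intro i hi
      interval_cases i
      refine ⟨p, by simpa using hp, ?_⟩
      have hp' : 0 < p := lt_of_not_ge (by simpa using hpos)
      norm_num
      nlinarith⟩
end

section
/- Let F : ℝ ⇒ ℝ be a cyclically quasi-monotone multi-map with full domain, let C_* = ⋂_{x∈ℝ} C^F(x), and assume C_* is a non-empty compact interval [α, β]. Then: (a) for all α < x < x', one has x ≺_F x' if F(x) ≠ {0}, and x ⪯_F x' in every case; (b) for every q > 0, the function f(x) = |x − (α+β)/2|^q is lower semi-continuous, quasi-convex, and satisfies F(x) ⊆ N_f(x) for every x ∈ ℝ. -/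
/-- The normal cone multi-map of `f : ℝ → ℝ`. -/
def NormalConeMap1 (f : ℝ → ℝ) (x : ℝ) : Set ℝ :=
  {p | ∀ w, f w ≤ f x → p * (w - x) ≤ 0}

theorem aux_no_cycle (F : ℝ → Set ℝ) (hdom : ∀ x, (F x).Nonempty)
    (hF : CyclicallyQuasiMonotone1 F) (a : ℝ) : ¬ PrecF1 F a a := by
  rintro ⟨N, x, hN, hx0, hxN, hpath⟩
  classical
  choose! p hpF hppos using hpath
  obtain ⟨i, hi, hle⟩ := hF N x p hN (hxN.trans hx0.symm) (fun i hi => hpF i hi)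
  exact absurd hle (not_le.mpr (hppos i hi))

theorem aux_step (F : ℝ → Set ℝ) {p a b : ℝ} (hp : p ∈ F a) (h : 0 < p * (b - a)) :
    PrecF1 F a b := by
  refine ⟨1, fun i => if i = 0 then a else b, one_pos, by simp, by simp, ?_⟩
  intro i hi
  interval_cases i
  exact ⟨p, by simpa using hp, by simpa using h⟩

theorem aux_concat (F : ℝ → Set ℝ) {a b c : ℝ} (h1 : PrecF1 F a b) (h2 : PrecF1 F b c) :
    PrecF1 F a c := by
  obtain ⟨N, x, hN, hx0, hxN, hx⟩ := h1
  obtain ⟨M, y, hM, hy0, hyM, hy⟩ := h2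
  refine ⟨N + M, fun i => if i < N then x i else y (i - N), by omega, by simp [hN, hx0], ?_, ?_⟩
  · simp only [if_neg (show ¬ N + M < N by omega), show N + M - N = M by omega]
    exact hyM
  · intro i hi
    by_cases h : i < N
    · obtain ⟨p, hpF, hpp⟩ := hx i h
      refine ⟨p, by simpa [h] using hpF, ?_⟩
      rcases Nat.lt_or_ge (i + 1) N with h' | h'
      · simpa [h, h'] using hpp
      · have hiN : i + 1 = N := by omega
        have e : (if i + 1 < N then x (i + 1) else y (i + 1 - N)) = x (i + 1) := by
          rw [if_neg (by omega), hiN, Nat.sub_self, hy0, ← hxN]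
        simp only [e, if_pos h]
        exact hpp
    · obtain ⟨p, hpF, hpp⟩ := hy (i - N) (by omega)
      refine ⟨p, by simpa [h] using hpF, ?_⟩
      simp only [if_neg (show ¬ i + 1 < N by omega), if_neg h,
        show i + 1 - N = (i - N) + 1 by omega]
      exact hpp

theorem aux_neg (F : ℝ → Set ℝ) (α β : ℝ) (hαβ : α ≤ β)
    (hC : (⋂ x : ℝ, CF1 F x) = Set.Icc α β)
    {p y : ℝ} (hp : p ∈ F y) (hneg : p < 0) (hy : α < y) (t : ℝ) :
    PrecF1 F y t := by
  set z := min β ((α + y) / 2) with hz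
  have hz1 : z ∈ Set.Icc α β := ⟨le_min hαβ (by linarith), min_le_left _ _⟩
  have hzy : z < y := lt_of_le_of_lt (min_le_right _ _) (by linarith)
  have hstep : PrecF1 F y z := aux_step F hp (mul_pos_of_neg_of_neg hneg (by linarith))
  have hz2 : z ∈ ⋂ x : ℝ, CF1 F x := by rw [hC]; exact hz1
  exact Set.mem_iInter.mp hz2 t y hstep

theorem aux_pos (F : ℝ → Set ℝ) (α β : ℝ) (hαβ : α ≤ β)
    (hC : (⋂ x : ℝ, CF1 F x) = Set.Icc α β)
    {p y : ℝ} (hp : p ∈ F y) (hpos : 0 < p) (hy : y < β) (t : ℝ) :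
    PrecF1 F y t := by
  set z := max α ((y + β) / 2) with hz
  have hz1 : z ∈ Set.Icc α β := ⟨le_max_left _ _, max_le hαβ (by linarith)⟩
  have hzy : y < z := lt_of_lt_of_le (by linarith) (le_max_right _ _)
  have hstep : PrecF1 F y z := aux_step F hp (mul_pos hpos (by linarith))
  have hz2 : z ∈ ⋂ x : ℝ, CF1 F x := by rw [hC]; exact hz1
  exact Set.mem_iInter.mp hz2 t y hstep

theorem stmt12 (F : ℝ → Set ℝ) (hdom : ∀ x, (F x).Nonempty)
    (hF : CyclicallyQuasiMonotone1 F) (α β : ℝ) (hαβ : α ≤ β)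
    (hC : (⋂ x : ℝ, CF1 F x) = Set.Icc α β) :
    (∀ x x', α < x → x < x' →
      ((F x ≠ {0} → PrecF1 F x x') ∧ PreceqF1 F x x')) ∧
    (∀ q : ℝ, 0 < q →
      LowerSemicontinuous (fun x : ℝ => |x - (α + β) / 2| ^ q) ∧
      (∀ ℓ : ℝ, Convex ℝ {x : ℝ | |x - (α + β) / 2| ^ q ≤ ℓ}) ∧
      (∀ x, F x ⊆ NormalConeMap1 (fun x : ℝ => |x - (α + β) / 2| ^ q) x)) := by
  have hm1 : α ≤ (α + β) / 2 := by linarith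
  have hm2 : (α + β) / 2 ≤ β := by linarith
  constructor
  · intro x x' hx hxx'
    constructor
    · intro hFx
      have hne : ∃ p ∈ F x, p ≠ 0 := by
        by_contra h
        push_neg at h
        exact hFx (Set.eq_singleton_iff_nonempty_unique_mem.mpr ⟨hdom x, h⟩)
      obtain ⟨p, hpF, hp0⟩ := hne
      rcases hp0.lt_or_gt with hneg | hpos
      · exact aux_neg F α β hαβ hC hpF hneg hx x'
      · exact aux_step F hpF (mul_pos hpos (by linarith))
    · intro w hw
      obtain ⟨N, y, hN, hy0, hyN, hpath⟩ := hw
      obtain ⟨p, hpF, hpp⟩ := hpath (N - 1) (by omega)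
      rw [show N - 1 + 1 = N by omega, hyN] at hpp
      rcases lt_trichotomy p 0 with hneg | h0 | hpos
      · have hgt : x < y (N - 1) := by nlinarith
        have h2 : PrecF1 F (y (N - 1)) x' :=
          aux_neg F α β hαβ hC hpF hneg (lt_trans hx hgt) x'
        rcases Nat.eq_or_lt_of_le hN with h1 | h1
        · have : y (N - 1) = w := by rw [show N - 1 = 0 by omega, hy0]
          rwa [this] at h2
        · refine aux_concat F ⟨N - 1, y, by omega, hy0, rfl, ?_⟩ h2
          intro i hi
          exact hpath i (by omega)
      · rw [h0, zero_mul] at hpp; exact absurd hpp (lt_irrefl 0)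
      · have hlt : y (N - 1) < x := by nlinarith
        refine ⟨N, fun i => if i < N then y i else x', hN, by simp [hN, hy0], by simp, ?_⟩
        intro i hi
        rcases Nat.lt_or_ge (i + 1) N with h' | h'
        · obtain ⟨q', hq'F, hq'⟩ := hpath i hi
          exact ⟨q', by simpa [hi] using hq'F, by simpa [hi, h'] using hq'⟩
        · have hiN : i = N - 1 := by omega
          subst hiN
          refine ⟨p, ?_, ?_⟩
          · show p ∈ F (if N - 1 < N then y (N - 1) else x')
            rw [if_pos (show N - 1 < N by omega)]; exact hpF
          · show 0 < p * ((if N - 1 + 1 < N then y (N - 1 + 1) else x') -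
              (if N - 1 < N then y (N - 1) else x'))
            rw [if_neg (show ¬ N - 1 + 1 < N by omega), if_pos (show N - 1 < N by omega)]
            exact mul_pos hpos (by linarith)
  · intro q hq
    have hcont : Continuous fun x : ℝ => |x - (α + β) / 2| ^ q := by
      rw [continuous_iff_continuousAt]
      intro x
      exact (Real.continuousAt_rpow_const _ q (Or.inr hq.le)).comp
        ((continuous_abs.comp (continuous_id.sub continuous_const)).continuousAt)
    refine ⟨hcont.lowerSemicontinuous, ?_, ?_⟩
    · intro ℓ a ha b hb ta tb hta htb htab
      simp only [Set.mem_setOf_eq, smul_eq_mul] at ha hb ⊢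
      set m := (α + β) / 2 with hmdef
      have hc : ta * a + tb * b - m = ta * (a - m) + tb * (b - m) := by
        linear_combination m * htab
      have habs : |ta * a + tb * b - m| ≤ max |a - m| |b - m| := by
        rw [hc]
        calc |ta * (a - m) + tb * (b - m)| ≤ |ta * (a - m)| + |tb * (b - m)| := abs_add_le _ _
          _ = ta * |a - m| + tb * |b - m| := by
              rw [abs_mul, abs_mul, abs_of_nonneg hta, abs_of_nonneg htb]
          _ ≤ ta * max |a - m| |b - m| + tb * max |a - m| |b - m| := by
              gcongr
              exacts [le_max_left _ _, le_max_right _ _]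
          _ = max |a - m| |b - m| := by rw [← add_mul, htab, one_mul]
      refine (Real.rpow_le_rpow (abs_nonneg _) habs hq.le).trans ?_
      rcases max_choice |a - m| |b - m| with h | h <;> rw [h]
      exacts [ha, hb]
    · intro x p hp w hw
      set m := (α + β) / 2 with hmdef
      simp only at hw
      have habs : |w - m| ≤ |x - m| := by
        by_contra h
        push_neg at h
        exact absurd hw (not_le.mpr (Real.rpow_lt_rpow (abs_nonneg _) h hq))
      rcases lt_trichotomy p 0 with hneg | h0 | hpos
      · have hxw : x ≤ w := by
          by_contra h
          push_neg at h
          have hmx : m < x := by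
            by_contra h2
            push_neg at h2
            have e1 : |x - m| = m - x := by rw [abs_of_nonpos (by linarith)]; ring
            have e2 : m - w ≤ |w - m| := by rw [abs_sub_comm]; exact le_abs_self _
            linarith
          exact aux_no_cycle F hdom hF x
            (aux_neg F α β hαβ hC hp hneg (lt_of_le_of_lt hm1 hmx) x)
        nlinarith
      · rw [h0, zero_mul]
      · have hwx : w ≤ x := by
          by_contra h
          push_neg at h
          have hxm : x < m := by
            by_contra h2
            push_neg at h2
            have e1 : |x - m| = x - m := abs_of_nonneg (by linarith)
            have e2 : w - m ≤ |w - m| := le_abs_self _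
            linarith
          exact aux_no_cycle F hdom hF x
            (aux_pos F α β hαβ hC hp hpos (lt_of_lt_of_le hxm hm2) x)
        nlinarith
end

section
/- Let F : ℝ ⇒ ℝ be a cyclically quasi-monotone multi-map with full domain, and let C_* = ⋂_{x∈ℝ} C^F(x). If C_* is empty or is a closed half-line, then the relation ⪯_F is total: for all x, y ∈ ℝ, either x ⪯_F y or y ⪯_F x. -/
/-- No ascending cycle: `a ⊀ a`. -/
lemma no_self (F : ℝ → Set ℝ) (hF : CyclicallyQuasiMonotone1 F) (a : ℝ) :
    ¬ PrecF1 F a a := by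
  rintro ⟨N, x, hN, h0, hNa, hasc⟩
  choose! p hp hpos using hasc
  obtain ⟨i, hi, hle⟩ := hF N x p hN (by rw [hNa, h0]) hp
  exact absurd (hpos i hi) (not_lt.2 hle)

/-- One-step precedence. -/
lemma prec_single (F : ℝ → Set ℝ) {a b p : ℝ} (hp : p ∈ F a)
    (h : 0 < p * (b - a)) : PrecF1 F a b := by
  refine ⟨1, fun i => if i = 0 then a else b, one_pos, by simp, by simp, ?_⟩
  intro i hi
  have : i = 0 := by omega
  subst this
  exact ⟨p, hp, by simpa using h⟩

/-- Separation: a point with a positive value dominates any point with a negative value. -/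
lemma sep (F : ℝ → Set ℝ) (hF : CyclicallyQuasiMonotone1 F)
    {a b p q : ℝ} (hp : p ∈ F a) (hq : q ∈ F b) (hp0 : 0 < p) (hq0 : q < 0) :
    b ≤ a := by
  by_contra h
  push_neg at h
  apply no_self F hF a
  refine ⟨2, fun i => if i = 0 then a else if i = 1 then b else a, two_pos, by simp, by simp, ?_⟩
  intro i hi
  interval_cases i
  · refine ⟨p, by simpa using hp, ?_⟩
    simp only [if_neg one_ne_zero, if_pos rfl]
    norm_num
    nlinarith
  · refine ⟨q, by simpa using hq, ?_⟩
    norm_num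
    nlinarith

/-- If `F` has no negative values, precedence extends upwards. -/
lemma prec_extend_up (F : ℝ → Set ℝ) (hNn : ∀ a, ∀ q ∈ F a, 0 ≤ q)
    {w x y : ℝ} (hxy : x ≤ y) (h : PrecF1 F w x) : PrecF1 F w y := by
  obtain ⟨N, xs, hN, h0, hNx, hasc⟩ := h
  refine ⟨N, fun i => if i = N then y else xs i, hN, ?_, by simp, ?_⟩
  · show (if 0 = N then y else xs 0) = w
    rw [if_neg (by omega), h0]
  · intro i hi
    obtain ⟨p, hpmem, hpos⟩ := hasc i hi
    have h1 : i ≠ N := by omega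
    by_cases hiN : i + 1 = N
    · refine ⟨p, by simpa [h1] using hpmem, ?_⟩
      simp only [if_neg h1, if_pos hiN]
      have hx1 : xs (i + 1) = x := by rw [hiN, hNx]
      rw [hx1] at hpos
      have hp0 : 0 ≤ p := hNn _ p hpmem
      nlinarith [mul_nonneg hp0 (sub_nonneg.2 hxy)]
    · exact ⟨p, by simpa [h1] using hpmem, by simpa [h1, hiN] using hpos⟩

/-- If `F` has no positive values, precedence extends downwards. -/
lemma prec_extend_down (F : ℝ → Set ℝ) (hP : ∀ a, ∀ q ∈ F a, q ≤ 0)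
    {w x y : ℝ} (hxy : y ≤ x) (h : PrecF1 F w x) : PrecF1 F w y := by
  obtain ⟨N, xs, hN, h0, hNx, hasc⟩ := h
  refine ⟨N, fun i => if i = N then y else xs i, hN, ?_, by simp, ?_⟩
  · show (if 0 = N then y else xs 0) = w
    rw [if_neg (by omega), h0]
  · intro i hi
    obtain ⟨p, hpmem, hpos⟩ := hasc i hi
    have h1 : i ≠ N := by omega
    by_cases hiN : i + 1 = N
    · refine ⟨p, by simpa [h1] using hpmem, ?_⟩
      simp only [if_neg h1, if_pos hiN]
      have hx1 : xs (i + 1) = x := by rw [hiN, hNx]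
      rw [hx1] at hpos
      have hp0 : p ≤ 0 := hP _ p hpmem
      nlinarith [mul_nonneg (neg_nonneg.2 hp0) (sub_nonneg.2 hxy)]
    · exact ⟨p, by simpa [h1] using hpmem, by simpa [h1, hiN] using hpos⟩

theorem stmt13 (F : ℝ → Set ℝ) (hdom : ∀ x, (F x).Nonempty)
    (hF : CyclicallyQuasiMonotone1 F)
    (hC : (⋂ x : ℝ, CF1 F x) = ∅ ∨
      ∃ a : ℝ, (⋂ x : ℝ, CF1 F x) = Set.Ici a ∨ (⋂ x : ℝ, CF1 F x) = Set.Iic a) :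
    ∀ x y : ℝ, PreceqF1 F x y ∨ PreceqF1 F y x := by
  by_cases hNn : ∀ a, ∀ q ∈ F a, 0 ≤ q
  · intro x y
    rcases le_total x y with h | h
    · exact Or.inl fun w hw => prec_extend_up F hNn h hw
    · exact Or.inr fun w hw => prec_extend_up F hNn h hw
  by_cases hP : ∀ a, ∀ q ∈ F a, q ≤ 0
  · intro x y
    rcases le_total y x with h | h
    · exact Or.inl fun w hw => prec_extend_down F hP h hw
    · exact Or.inr fun w hw => prec_extend_down F hP h hw
  exfalso
  push_neg at hNn hP
  obtain ⟨n₀, q₀, hq₀mem, hq₀⟩ := hNn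
  obtain ⟨p₀, r₀, hr₀mem, hr₀⟩ := hP
  -- the set of points with a negative value
  set Nn : Set ℝ := {a | ∃ q ∈ F a, q < 0} with hNndef
  have hNne : Nn.Nonempty := ⟨n₀, q₀, hq₀mem, hq₀⟩
  have hNbdd : BddAbove Nn := by
    refine ⟨p₀, fun a ha => ?_⟩
    obtain ⟨q, hqmem, hq⟩ := ha
    exact sep F hF hr₀mem hqmem hr₀ hq
  set w₀ : ℝ := sSup Nn with hw₀def
  -- nothing precedes w₀
  have hD : ∀ w, ¬ PrecF1 F w w₀ := by
    rintro w ⟨N, xs, hN, h0, hNw, hasc⟩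
    obtain ⟨p, hpmem, hpos⟩ := hasc (N - 1) (by omega)
    have hidx : N - 1 + 1 = N := by omega
    rw [hidx, hNw] at hpos
    rcases lt_trichotomy p 0 with hp | hp | hp
    · -- xs (N-1) ∈ Nn, but w₀ < xs (N-1)
      have hmem : xs (N - 1) ∈ Nn := ⟨p, hpmem, hp⟩
      have hle : xs (N - 1) ≤ w₀ := le_csSup hNbdd hmem
      nlinarith
    · rw [hp] at hpos; simp at hpos
    · -- xs (N-1) dominates all of Nn, but xs (N-1) < w₀
      have hub : ∀ a ∈ Nn, a ≤ xs (N - 1) := by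
        rintro a ⟨q, hqmem, hq⟩
        exact sep F hF hpmem hqmem hp hq
      have hle : w₀ ≤ xs (N - 1) := csSup_le hNne hub
      nlinarith
  have hw₀mem : w₀ ∈ ⋂ x : ℝ, CF1 F x :=
    Set.mem_iInter.2 fun x w hw => absurd hw (hD w)
  -- every element of the intersection lies in [n₀, p₀]
  have hbound : ∀ w ∈ ⋂ x : ℝ, CF1 F x, n₀ ≤ w ∧ w ≤ p₀ := by
    intro w hw
    rw [Set.mem_iInter] at hw
    constructor
    · by_contra hlt
      push_neg at hlt
      have hprec : PrecF1 F n₀ w :=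
        prec_single F hq₀mem (by nlinarith)
      exact no_self F hF n₀ (hw n₀ n₀ hprec)
    · by_contra hlt
      push_neg at hlt
      have hprec : PrecF1 F p₀ w :=
        prec_single F hr₀mem (by nlinarith)
      exact no_self F hF p₀ (hw p₀ p₀ hprec)
  rcases hC with hC | ⟨a, hC | hC⟩
  · rw [hC] at hw₀mem; exact hw₀mem
  · have hz : max a (p₀ + 1) ∈ ⋂ x : ℝ, CF1 F x := by
      rw [hC]; exact Set.mem_Ici.2 (le_max_left _ _)
    have := (hbound _ hz).2
    have := le_max_right a (p₀ + 1)
    linarith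
  · have hz : min a (n₀ - 1) ∈ ⋂ x : ℝ, CF1 F x := by
      rw [hC]; exact Set.mem_Iic.2 (min_le_left _ _)
    have := (hbound _ hz).1
    have := min_le_right a (n₀ - 1)
    linarith
end

section
/- Let F : ℝ ⇒ ℝ be a cyclically quasi-monotone multi-map with full domain. Then there exists a lower semi-continuous quasi-convex function f : ℝ → ℝ such that F(x) ⊆ N_f(x) for every x ∈ ℝ. -/
theorem stmt14 (F : ℝ → Set ℝ) (hdom : ∀ x, (F x).Nonempty)
    (hF : CyclicallyQuasiMonotone1 F) :
    ∃ f : ℝ → ℝ, LowerSemicontinuous f ∧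
      (∀ ℓ : ℝ, Convex ℝ {x : ℝ | f x ≤ ℓ}) ∧
      ∀ x, F x ⊆ NormalConeMap1 f x := by
  have key : ∀ x y p q, p ∈ F x → q ∈ F y → 0 < p → q < 0 → y ≤ x := by
    intro x y p q hp hq hppos hqneg
    obtain ⟨i, hi, hle⟩ := hF 2 (fun i => if i = 1 then y else x)
      (fun i => if i = 1 then q else p) (by norm_num) (by norm_num)
      (by intro i hi; interval_cases i <;> simpa)
    interval_cases i <;> norm_num at hle <;> nlinarith
  by_cases hN : ∃ y q, q ∈ F y ∧ q < 0
  · by_cases hP : ∃ x p, p ∈ F x ∧ 0 < p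
    · obtain ⟨y₀, q₀, hq₀, hq₀n⟩ := hN
      obtain ⟨x₀, p₀, hp₀, hp₀p⟩ := hP
      set P : Set ℝ := {x | ∃ p ∈ F x, 0 < p} with hPdef
      set Q : Set ℝ := {y | ∃ q ∈ F y, q < 0} with hQdef
      have hPne : P.Nonempty := ⟨x₀, p₀, hp₀, hp₀p⟩
      have hQne : Q.Nonempty := ⟨y₀, q₀, hq₀, hq₀n⟩
      have hbddP : BddBelow P := ⟨y₀, fun x ⟨p, hp, hpp⟩ => key x y₀ p q₀ hp hq₀ hpp hq₀n⟩
      have hbddQ : BddAbove Q := ⟨x₀, fun y ⟨q, hq, hqn⟩ => key x₀ y p₀ q hp₀ hq hp₀p hqn⟩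
      set a := sInf P with ha
      set b := sSup Q with hb
      have hba : b ≤ a := csSup_le hQne fun y ⟨q, hq, hqn⟩ =>
        le_csInf hPne fun x ⟨p, hp, hpp⟩ => key x y p q hp hq hpp hqn
      refine ⟨fun x => max (x - a) (max (b - x) 0), ?_, ?_, ?_⟩
      · exact (Continuous.max (by continuity) (Continuous.max (by continuity)
          continuous_const)).lowerSemicontinuous
      · intro ℓ u hu v hv s t hs ht hst
        simp only [Set.mem_setOf_eq, max_le_iff, smul_eq_mul] at *
        obtain ⟨h1, h2, h3⟩ := hu
        obtain ⟨h4, h5, h6⟩ := hv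
        have htt : t = 1 - s := by linarith
        subst htt
        refine ⟨?_, ?_, h3⟩
        · nlinarith [mul_nonneg hs (by linarith : (0:ℝ) ≤ ℓ - (u - a)),
            mul_nonneg (by linarith : (0:ℝ) ≤ 1 - s) (by linarith : (0:ℝ) ≤ ℓ - (v - a))]
        · nlinarith [mul_nonneg hs (by linarith : (0:ℝ) ≤ ℓ - (b - u)),
            mul_nonneg (by linarith : (0:ℝ) ≤ 1 - s) (by linarith : (0:ℝ) ≤ ℓ - (b - v))]
      · intro x p hp w hw
        simp only at hw
        rcases lt_trichotomy p 0 with h | h | h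
        · have hxb : x ≤ b := le_csSup hbddQ ⟨p, hp, h⟩
          have hfx : max (x - a) (max (b - x) 0) = b - x := by
            rw [max_eq_left (by linarith : (0:ℝ) ≤ b - x),
              max_eq_right (by linarith : x - a ≤ b - x)]
          rw [hfx] at hw
          have h2 : b - w ≤ b - x := le_trans (le_trans (le_max_left _ _) (le_max_right _ _)) hw
          nlinarith [mul_nonneg (neg_nonneg.mpr h.le) (sub_nonneg.mpr (by linarith : x ≤ w))]
        · simp [h]
        · have hxa : a ≤ x := csInf_le hbddP ⟨p, hp, h⟩
          have hfx : max (x - a) (max (b - x) 0) = x - a := by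
            rw [max_eq_right (by linarith : b - x ≤ (0:ℝ)),
              max_eq_left (by linarith : (0:ℝ) ≤ x - a)]
          rw [hfx] at hw
          have h2 : w - a ≤ x - a := le_trans (le_max_left _ _) hw
          nlinarith [mul_nonneg h.le (sub_nonneg.mpr (by linarith : w ≤ x))]
    · push_neg at hP
      refine ⟨fun x => -x, continuous_neg.lowerSemicontinuous, ?_, ?_⟩
      · intro ℓ u hu v hv s t hs ht hst
        simp only [Set.mem_setOf_eq, smul_eq_mul] at *
        have htt : t = 1 - s := by linarith
        subst htt
        nlinarith [mul_nonneg hs (by linarith : (0:ℝ) ≤ ℓ + u),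
          mul_nonneg (by linarith : (0:ℝ) ≤ 1 - s) (by linarith : (0:ℝ) ≤ ℓ + v)]
      · intro x p hp w hw
        simp only [neg_le_neg_iff] at hw
        have hple : p ≤ 0 := hP x p hp
        nlinarith [mul_nonneg (neg_nonneg.mpr hple) (sub_nonneg.mpr hw)]
  · push_neg at hN
    refine ⟨fun x => x, continuous_id.lowerSemicontinuous, ?_, ?_⟩
    · intro ℓ u hu v hv s t hs ht hst
      simp only [Set.mem_setOf_eq, smul_eq_mul] at *
      have htt : t = 1 - s := by linarith
      subst htt
      nlinarith [mul_nonneg hs (by linarith : (0:ℝ) ≤ ℓ - u),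
        mul_nonneg (by linarith : (0:ℝ) ≤ 1 - s) (by linarith : (0:ℝ) ≤ ℓ - v)]
    · intro x p hp w hw
      simp only at hw
      have hple : 0 ≤ p := hN x p hp
      nlinarith [mul_nonneg hple (sub_nonneg.mpr hw)]
end
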